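/- The quantum exterior algebra Λ_q(u_+) on the adjoint module of U_q(sl(2)) (for generic q) has the same graded dimensions as the classical exterior algebra on a 3-dimensional space: dimensions 1, 3, 3, 1 in degrees 0, 1, 2, 3, with degree-2 basis {v_1∧v_0, v_1∧v_{-1}, v_0∧v_{-1}} and degree-3 basis {v_1∧v_0∧v_{-1}}, and all components of degree ≥ 4 vanish. -/

import Mathlib

set_option synthInstance.maxHeartbeats 1000000
set_option maxHeartbeats 1000000


open TensorAlgebra

/-- The 3-dimensional space u₊ = span{v₁, v₀, v₋₁}. -/
abbrev Vsp : Type := Fin 3 → ℝ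

def v1 : Vsp := Pi.single 0 1
def v0 : Vsp := Pi.single 1 1
def vm1 : Vsp := Pi.single 2 1

/-- The quantum symmetric 2-tensors generating the defining ideal of Λ_q(u₊). -/
inductive qRel (q : ℝ) : TensorAlgebra ℝ Vsp → TensorAlgebra ℝ Vsp → Prop
  | r1 : qRel q (ι ℝ v1 * ι ℝ v1) 0
  | r2 : qRel q (ι ℝ v1 * ι ℝ v0 + q⁻¹ ^ 2 • (ι ℝ v0 * ι ℝ v1)) 0
  | r3 : qRel q (ι ℝ v0 * ι ℝ vm1 + q⁻¹ ^ 2 • (ι ℝ vm1 * ι ℝ v0)) 0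
  | r4 : qRel q (ι ℝ vm1 * ι ℝ vm1) 0
  | r5 : qRel q (ι ℝ v1 * ι ℝ vm1 + q ^ 2 • (ι ℝ vm1 * ι ℝ v1)
      - q ^ 2 • (ι ℝ v0 * ι ℝ v0)) 0
  | r6 : qRel q (ι ℝ v1 * ι ℝ vm1 + q⁻¹ ^ 4 • (ι ℝ vm1 * ι ℝ v1)
      + (q⁻¹ * (q + q⁻¹)) • (ι ℝ v0 * ι ℝ v0)) 0

/-- The quantum exterior algebra Λ_q(u₊). -/
abbrev LamQ (q : ℝ) := RingQuot (qRel q)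

noncomputable def mkQ (q : ℝ) : TensorAlgebra ℝ Vsp →ₐ[ℝ] LamQ q :=
  RingQuot.mkAlgHom ℝ (qRel q)

noncomputable def X1 (q : ℝ) : LamQ q := mkQ q (ι ℝ v1)
noncomputable def X0 (q : ℝ) : LamQ q := mkQ q (ι ℝ v0)
noncomputable def Xm1 (q : ℝ) : LamQ q := mkQ q (ι ℝ vm1)

/-- The 8 monomials 1; v₁, v₀, v₋₁; v₁∧v₀, v₁∧v₋₁, v₀∧v₋₁; v₁∧v₀∧v₋₁. -/
noncomputable def monos (q : ℝ) : Fin 8 → LamQ q :=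
  ![1, X1 q, X0 q, Xm1 q, X1 q * X0 q, X1 q * Xm1 q, X0 q * Xm1 q,
    X1 q * X0 q * Xm1 q]


/-! ### Auxiliary material -/

section AuxMatrices

open Matrix

/-- Standard basis matrices, our workhorses. -/
noncomputable def Estd (i j : Fin 8) : Matrix (Fin 8) (Fin 8) ℝ :=
  Matrix.single i j 1

lemma Estd_mul (i j k l : Fin 8) :
    Estd i j * Estd k l = if j = k then Estd i l else 0 := by
  split
  · subst ‹j = k›; simp [Estd, Matrix.single_mul_single_same i j l 1 1]
  · exact Matrix.single_mul_single_of_ne (h := by assumption) ..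

/-- Left multiplication by v₁ in the 8-dimensional regular representation. -/
noncomputable def Mat1 : Matrix (Fin 8) (Fin 8) ℝ :=
  Estd 1 0 + Estd 4 2 + Estd 5 3 + Estd 7 6

/-- Left multiplication by v₀. -/
noncomputable def Mat0 (q : ℝ) : Matrix (Fin 8) (Fin 8) ℝ :=
  Estd 2 0 + (-q^2) • Estd 4 1 + (q⁻¹^2-1) • Estd 5 2 + Estd 6 3 + (-q^2) • Estd 7 5

/-- Left multiplication by v₋₁. -/
noncomputable def Matm (q : ℝ) : Matrix (Fin 8) (Fin 8) ℝ :=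
  Estd 3 0 + (-1 : ℝ) • Estd 5 1 + (-q^2) • Estd 6 2 + (q^2) • Estd 7 4

lemma matRel1 : Mat1 * Mat1 = 0 := by
  simp only [Mat1, add_mul, mul_add, Estd_mul]; simp

lemma matRel2 (q : ℝ) (hq : q ≠ 0) : Mat1 * Mat0 q + q⁻¹^2 • (Mat0 q * Mat1) = 0 := by
  simp only [Mat1, Mat0, add_mul, mul_add, smul_mul_assoc, mul_smul_comm, Estd_mul]
  simp
  match_scalars <;> field_simp <;> ring

lemma matRel3 (q : ℝ) (hq : q ≠ 0) : Mat0 q * Matm q + q⁻¹^2 • (Matm q * Mat0 q) = 0 := by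
  simp only [Mat0, Matm, add_mul, mul_add, smul_mul_assoc, mul_smul_comm, Estd_mul]
  simp
  match_scalars <;> field_simp <;> ring

lemma matRel4 (q : ℝ) : Matm q * Matm q = 0 := by
  simp only [Matm, add_mul, mul_add, smul_mul_assoc, mul_smul_comm, Estd_mul]; simp

lemma matRel5 (q : ℝ) (hq : q ≠ 0) :
    Mat1 * Matm q + q^2 • (Matm q * Mat1) - q^2 • (Mat0 q * Mat0 q) = 0 := by
  simp only [Mat1, Mat0, Matm, add_mul, mul_add, smul_mul_assoc, mul_smul_comm, Estd_mul]
  simp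
  match_scalars <;> field_simp <;> ring

lemma matRel6 (q : ℝ) (hq : q ≠ 0) :
    Mat1 * Matm q + q⁻¹^4 • (Matm q * Mat1) + (q⁻¹*(q+q⁻¹)) • (Mat0 q * Mat0 q) = 0 := by
  simp only [Mat1, Mat0, Matm, add_mul, mul_add, smul_mul_assoc, mul_smul_comm, Estd_mul]
  simp
  match_scalars <;> field_simp <;> ring

/-- The linear map sending the generators to the corresponding matrices. -/
noncomputable def fmap (q : ℝ) : Vsp →ₗ[ℝ] Matrix (Fin 8) (Fin 8) ℝ where
  toFun x := x 0 • Mat1 + x 1 • Mat0 q + x 2 • Matm q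
  map_add' x y := by simp only [Pi.add_apply, add_smul]; abel
  map_smul' r x := by simp only [Pi.smul_apply, smul_eq_mul, RingHom.id_apply, mul_smul,
    smul_add]

lemma fmap_v1 (q : ℝ) : fmap q v1 = Mat1 := by
  simp [fmap, v1, Pi.single_apply]

lemma fmap_v0 (q : ℝ) : fmap q v0 = Mat0 q := by
  simp [fmap, v0, Pi.single_apply]

lemma fmap_vm1 (q : ℝ) : fmap q vm1 = Matm q := by
  simp [fmap, vm1, Pi.single_apply]

lemma matRel_all (q : ℝ) (hq : q ≠ 0) : ∀ ⦃x y⦄, qRel q x y →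
    (TensorAlgebra.lift ℝ (fmap q)) x = (TensorAlgebra.lift ℝ (fmap q)) y := by
  intro x y h
  induction h <;>
    simp only [map_add, map_sub, _root_.map_mul, _root_.map_smul, map_zero, TensorAlgebra.lift_ι_apply,
      fmap_v1, fmap_v0, fmap_vm1]
  · exact matRel1
  · exact matRel2 q hq
  · exact matRel3 q hq
  · exact matRel4 q
  · exact matRel5 q hq
  · exact matRel6 q hq

/-- The representation of Λ_q(u₊) on the 8-dimensional space. -/
noncomputable def phiRep (q : ℝ) (hq : q ≠ 0) : LamQ q →ₐ[ℝ] Matrix (Fin 8) (Fin 8) ℝ :=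
  RingQuot.liftAlgHom ℝ ⟨TensorAlgebra.lift ℝ (fmap q), matRel_all q hq⟩

lemma phiRep_X1 (q : ℝ) (hq : q ≠ 0) : phiRep q hq (X1 q) = Mat1 := by
  rw [X1, mkQ, phiRep, RingQuot.liftAlgHom_mkAlgHom_apply, TensorAlgebra.lift_ι_apply, fmap_v1]

lemma phiRep_X0 (q : ℝ) (hq : q ≠ 0) : phiRep q hq (X0 q) = Mat0 q := by
  rw [X0, mkQ, phiRep, RingQuot.liftAlgHom_mkAlgHom_apply, TensorAlgebra.lift_ι_apply, fmap_v0]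

lemma phiRep_Xm1 (q : ℝ) (hq : q ≠ 0) : phiRep q hq (Xm1 q) = Matm q := by
  rw [Xm1, mkQ, phiRep, RingQuot.liftAlgHom_mkAlgHom_apply, TensorAlgebra.lift_ι_apply, fmap_vm1]

/-- Extracting the 0-th column of a matrix, linearly. -/
noncomputable def col0 : Matrix (Fin 8) (Fin 8) ℝ →ₗ[ℝ] (Fin 8 → ℝ) where
  toFun M := fun i => M i 0
  map_add' _ _ := rfl
  map_smul' _ _ := rfl

end AuxMatrices

section AuxRelations

lemma qq1 (q : ℝ) : X1 q * X1 q = 0 := by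
  have h := RingQuot.mkAlgHom_rel ℝ (qRel.r1 (q := q))
  simpa [mkQ, X1, map_add, map_smul, map_mul] using h

lemma qq4 (q : ℝ) : Xm1 q * Xm1 q = 0 := by
  have h := RingQuot.mkAlgHom_rel ℝ (qRel.r4 (q := q))
  simpa [mkQ, Xm1, map_add, map_smul, map_mul] using h

lemma qq2 (q : ℝ) : X1 q * X0 q + q⁻¹^2 • (X0 q * X1 q) = 0 := by
  have h := RingQuot.mkAlgHom_rel ℝ (qRel.r2 (q := q))
  simpa [mkQ, X1, X0, map_add, map_smul, map_mul] using h

lemma qq3 (q : ℝ) : X0 q * Xm1 q + q⁻¹^2 • (Xm1 q * X0 q) = 0 := by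
  have h := RingQuot.mkAlgHom_rel ℝ (qRel.r3 (q := q))
  simpa [mkQ, X0, Xm1, map_add, map_smul, map_mul] using h

lemma qq5 (q : ℝ) :
    X1 q * Xm1 q + q^2 • (Xm1 q * X1 q) - q^2 • (X0 q * X0 q) = 0 := by
  have h := RingQuot.mkAlgHom_rel ℝ (qRel.r5 (q := q))
  simpa [mkQ, X1, X0, Xm1, map_add, map_sub, map_smul, map_mul] using h

lemma qq6 (q : ℝ) :
    X1 q * Xm1 q + q⁻¹^4 • (Xm1 q * X1 q) + (q⁻¹*(q+q⁻¹)) • (X0 q * X0 q) = 0 := by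
  have h := RingQuot.mkAlgHom_rel ℝ (qRel.r6 (q := q))
  simpa [mkQ, X1, X0, Xm1, map_add, map_smul, map_mul] using h

lemma qqA (q : ℝ) (hq : q ≠ 0) : X0 q * X1 q = (-q^2) • (X1 q * X0 q) := by
  have h := qq2 q
  have h2 : q^2 • (X1 q * X0 q + q⁻¹^2 • (X0 q * X1 q)) = 0 := by rw [h, smul_zero]
  rw [smul_add, smul_smul, show q^2 * q⁻¹^2 = 1 by field_simp, one_smul] at h2
  rw [eq_neg_of_add_eq_zero_right h2, ← neg_smul]

lemma qqD (q : ℝ) (hq : q ≠ 0) : Xm1 q * X0 q = (-q^2) • (X0 q * Xm1 q) := by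
  have h := qq3 q
  have h2 : q^2 • (X0 q * Xm1 q + q⁻¹^2 • (Xm1 q * X0 q)) = 0 := by rw [h, smul_zero]
  rw [smul_add, smul_smul, show q^2 * q⁻¹^2 = 1 by field_simp, one_smul] at h2
  rw [eq_neg_of_add_eq_zero_right h2, ← neg_smul]

lemma qqB (q : ℝ) (hq : q ≠ 0) : Xm1 q * X1 q = (-1 : ℝ) • (X1 q * Xm1 q) := by
  have h5 := qq5 q
  have h6 := qq6 q
  have key : (q^4+q^2+1) • (X1 q * Xm1 q + Xm1 q * X1 q) =
      (q^2+1) • (X1 q * Xm1 q + q^2 • (Xm1 q * X1 q) - q^2 • (X0 q * X0 q)) +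
      q^4 • (X1 q * Xm1 q + q⁻¹^4 • (Xm1 q * X1 q) + (q⁻¹*(q+q⁻¹)) • (X0 q * X0 q)) := by
    match_scalars <;> field_simp <;> ring
  rw [h5, h6, smul_zero, smul_zero, add_zero] at key
  have hne : (q^4+q^2+1 : ℝ) ≠ 0 := by positivity
  have h0 : X1 q * Xm1 q + Xm1 q * X1 q = 0 := by
    have h1 := congrArg (fun z => (q^4+q^2+1)⁻¹ • z) key
    simpa [smul_smul, inv_mul_cancel₀ hne] using h1
  rw [eq_neg_of_add_eq_zero_right h0, ← neg_one_smul ℝ]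

lemma qqC (q : ℝ) (hq : q ≠ 0) : X0 q * X0 q = (q⁻¹^2-1) • (X1 q * Xm1 q) := by
  have h5 := qq5 q
  rw [qqB q hq] at h5
  have key : X0 q * X0 q - (q⁻¹^2-1) • (X1 q * Xm1 q) =
      (-q⁻¹^2) • (X1 q * Xm1 q + q^2 • ((-1 : ℝ) • (X1 q * Xm1 q)) - q^2 • (X0 q * X0 q)) := by
    match_scalars <;> field_simp <;> ring
  rw [h5, smul_zero, sub_eq_zero] at key
  exact key

lemma ww1 (q : ℝ) (y : LamQ q) : X1 q * (X1 q * y) = 0 := by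
  rw [← mul_assoc, qq1, zero_mul]

lemma ww4 (q : ℝ) (y : LamQ q) : Xm1 q * (Xm1 q * y) = 0 := by
  rw [← mul_assoc, qq4, zero_mul]

lemma wwA (q : ℝ) (hq : q ≠ 0) (y : LamQ q) :
    X0 q * (X1 q * y) = (-q^2) • (X1 q * (X0 q * y)) := by
  rw [← mul_assoc, qqA q hq, smul_mul_assoc, mul_assoc]

lemma wwD (q : ℝ) (hq : q ≠ 0) (y : LamQ q) :
    Xm1 q * (X0 q * y) = (-q^2) • (X0 q * (Xm1 q * y)) := by
  rw [← mul_assoc, qqD q hq, smul_mul_assoc, mul_assoc]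

lemma wwB (q : ℝ) (hq : q ≠ 0) (y : LamQ q) :
    Xm1 q * (X1 q * y) = (-1 : ℝ) • (X1 q * (Xm1 q * y)) := by
  rw [← mul_assoc, qqB q hq, smul_mul_assoc, mul_assoc]

lemma wwC (q : ℝ) (hq : q ≠ 0) (y : LamQ q) :
    X0 q * (X0 q * y) = (q⁻¹^2-1) • (X1 q * (Xm1 q * y)) := by
  rw [← mul_assoc, qqC q hq, smul_mul_assoc, mul_assoc]

end AuxRelations

section AuxCol

lemma mat_10 (q : ℝ) : Mat1 * Mat0 q = Estd 4 0 + Estd 7 3 := by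
  simp only [Mat1, Mat0, add_mul, mul_add, smul_mul_assoc, mul_smul_comm, Estd_mul]
  simp

lemma mat_1m (q : ℝ) : Mat1 * Matm q = Estd 5 0 + (-q^2) • Estd 7 2 := by
  simp only [Mat1, Matm, add_mul, mul_add, smul_mul_assoc, mul_smul_comm, Estd_mul]
  simp

lemma mat_0m (q : ℝ) : Mat0 q * Matm q = Estd 6 0 + (q^2) • Estd 7 1 := by
  simp only [Mat0, Matm, add_mul, mul_add, smul_mul_assoc, mul_smul_comm, Estd_mul]
  simp

lemma mat_10m (q : ℝ) : Mat1 * Mat0 q * Matm q = Estd 7 0 := by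
  rw [mat_10]
  simp only [Matm, add_mul, mul_add, smul_mul_assoc, mul_smul_comm, Estd_mul]
  simp

lemma col0_Estd (i j : Fin 8) :
    col0 (Estd i j) = if j = 0 then Pi.single i 1 else 0 := by
  funext k
  by_cases hj : j = 0 <;> by_cases hik : i = k <;>
    simp [show ∀ (M : Matrix (Fin 8) (Fin 8) ℝ) i, col0 M i = M i 0 from fun _ _ => rfl, Estd, Matrix.single, Pi.single_apply, hj, hik, eq_comm]

lemma col0_one : col0 (1 : Matrix (Fin 8) (Fin 8) ℝ) = Pi.single (0 : Fin 8) 1 := by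
  funext k
  by_cases hk : k = (0 : Fin 8) <;>
    simp [show ∀ (M : Matrix (Fin 8) (Fin 8) ℝ) i, col0 M i = M i 0 from fun _ _ => rfl, Matrix.one_apply, Pi.single_apply, hk, eq_comm]

end AuxCol

/-- For generic q, Λ_q(u₊) has the classical graded dimensions 1, 3, 3, 1:
the 8 listed monomials form a basis (so the degree-2 component has basis
{v₁∧v₀, v₁∧v₋₁, v₀∧v₋₁} and degree 3 has basis {v₁∧v₀∧v₋₁}), and every
product of four generators vanishes. -/
theorem stmt_13 (q : ℝ) (hq : q ≠ 0) (hroot : ∀ n : ℕ, n ≠ 0 → q ^ n ≠ 1) :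
    LinearIndependent ℝ (monos q) ∧
    Submodule.span ℝ (Set.range (monos q)) = ⊤ ∧
    (∀ a ∈ ({X1 q, X0 q, Xm1 q} : Set (LamQ q)),
     ∀ b ∈ ({X1 q, X0 q, Xm1 q} : Set (LamQ q)),
     ∀ c ∈ ({X1 q, X0 q, Xm1 q} : Set (LamQ q)),
     ∀ d ∈ ({X1 q, X0 q, Xm1 q} : Set (LamQ q)), a * b * c * d = 0) := by
  classical
  refine ⟨?_, ?_, ?_⟩
  · -- linear independence
    refine LinearIndependent.of_comp (col0.comp (phiRep q hq).toLinearMap) ?_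
    have h0 : (col0.comp (phiRep q hq).toLinearMap) (monos q 0) = Pi.single (0 : Fin 8) 1 := by
      show col0 (phiRep q hq 1) = _
      rw [map_one, col0_one]
    have h1 : (col0.comp (phiRep q hq).toLinearMap) (monos q 1) = Pi.single (1 : Fin 8) 1 := by
      show col0 (phiRep q hq (X1 q)) = _
      rw [phiRep_X1]
      simp [Mat1, map_add, col0_Estd]
    have h2 : (col0.comp (phiRep q hq).toLinearMap) (monos q 2) = Pi.single (2 : Fin 8) 1 := by
      show col0 (phiRep q hq (X0 q)) = _
      rw [phiRep_X0]
      simp [Mat0, map_add, map_smul, col0_Estd]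
    have h3 : (col0.comp (phiRep q hq).toLinearMap) (monos q 3) = Pi.single (3 : Fin 8) 1 := by
      show col0 (phiRep q hq (Xm1 q)) = _
      rw [phiRep_Xm1]
      simp [Matm, map_add, map_smul, col0_Estd]
    have h4 : (col0.comp (phiRep q hq).toLinearMap) (monos q 4) = Pi.single (4 : Fin 8) 1 := by
      show col0 (phiRep q hq (X1 q * X0 q)) = _
      rw [map_mul, phiRep_X1, phiRep_X0, mat_10]
      simp [map_add, col0_Estd]
    have h5 : (col0.comp (phiRep q hq).toLinearMap) (monos q 5) = Pi.single (5 : Fin 8) 1 := by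
      show col0 (phiRep q hq (X1 q * Xm1 q)) = _
      rw [map_mul, phiRep_X1, phiRep_Xm1, mat_1m]
      simp [map_add, map_smul, col0_Estd]
    have h6 : (col0.comp (phiRep q hq).toLinearMap) (monos q 6) = Pi.single (6 : Fin 8) 1 := by
      show col0 (phiRep q hq (X0 q * Xm1 q)) = _
      rw [map_mul, phiRep_X0, phiRep_Xm1, mat_0m]
      simp [map_add, map_smul, col0_Estd]
    have h7 : (col0.comp (phiRep q hq).toLinearMap) (monos q 7) = Pi.single (7 : Fin 8) 1 := by
      show col0 (phiRep q hq (X1 q * X0 q * Xm1 q)) = _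
      rw [map_mul (phiRep q hq), map_mul (phiRep q hq), phiRep_X1, phiRep_X0, phiRep_Xm1,
        mat_10m]
      simp [col0_Estd]
    have hcomp : (⇑(col0.comp (phiRep q hq).toLinearMap) ∘ monos q) =
        fun i : Fin 8 => (Pi.single i 1 : Fin 8 → ℝ) := by
      funext i
      fin_cases i
      exacts [h0, h1, h2, h3, h4, h5, h6, h7]
    rw [hcomp]
    have hb := (Pi.basisFun ℝ (Fin 8)).linearIndependent
    have hbe : ⇑(Pi.basisFun ℝ (Fin 8)) = fun i : Fin 8 => (Pi.single i 1 : Fin 8 → ℝ) :=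
      funext fun i => Pi.basisFun_apply ℝ (Fin 8) i
    rwa [hbe] at hb
  · -- spanning
    have hmem : ∀ x : LamQ q, x ∈ Set.range (monos q) ↔
        x = 1 ∨ x = X1 q ∨ x = X0 q ∨ x = Xm1 q ∨ x = X1 q * X0 q ∨ x = X1 q * Xm1 q ∨
        x = X0 q * Xm1 q ∨ x = X1 q * X0 q * Xm1 q := by
      intro x
      simp [monos, Matrix.range_cons, Matrix.range_empty]
      tauto
    have h1S : (1 : LamQ q) ∈ Submodule.span ℝ (Set.range (monos q)) :=
      Submodule.subset_span ⟨0, rfl⟩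
    have hX1 : X1 q ∈ Submodule.span ℝ (Set.range (monos q)) :=
      Submodule.subset_span ⟨1, rfl⟩
    have hX0 : X0 q ∈ Submodule.span ℝ (Set.range (monos q)) :=
      Submodule.subset_span ⟨2, rfl⟩
    have hXm : Xm1 q ∈ Submodule.span ℝ (Set.range (monos q)) :=
      Submodule.subset_span ⟨3, rfl⟩
    have h10 : X1 q * X0 q ∈ Submodule.span ℝ (Set.range (monos q)) :=
      Submodule.subset_span ⟨4, rfl⟩
    have h1m : X1 q * Xm1 q ∈ Submodule.span ℝ (Set.range (monos q)) :=
      Submodule.subset_span ⟨5, rfl⟩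
    have h0m : X0 q * Xm1 q ∈ Submodule.span ℝ (Set.range (monos q)) :=
      Submodule.subset_span ⟨6, rfl⟩
    have h7a : X1 q * X0 q * Xm1 q ∈ Submodule.span ℝ (Set.range (monos q)) :=
      Submodule.subset_span ⟨7, rfl⟩
    have h7' : X1 q * (X0 q * Xm1 q) ∈ Submodule.span ℝ (Set.range (monos q)) := by
      rwa [mul_assoc] at h7a
    have hclosed : ∀ x ∈ Submodule.span ℝ (Set.range (monos q)),
        ∀ y ∈ Submodule.span ℝ (Set.range (monos q)),
        x * y ∈ Submodule.span ℝ (Set.range (monos q)) := by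
      intro x hx y hy
      induction hx using Submodule.span_induction with
      | mem x hxr =>
        induction hy using Submodule.span_induction with
        | mem y hyr =>
          rcases (hmem x).mp hxr with rfl|rfl|rfl|rfl|rfl|rfl|rfl|rfl <;>
            rcases (hmem y).mp hyr with rfl|rfl|rfl|rfl|rfl|rfl|rfl|rfl <;>
            (try simp only [qq1, qq4, qqA q hq, qqB q hq, qqC q hq, qqD q hq, ww1, ww4,
              wwA q hq, wwB q hq, wwC q hq, wwD q hq, mul_assoc, smul_mul_assoc,
              mul_smul_comm, smul_smul, one_mul, mul_one, zero_mul, mul_zero, smul_zero]) <;>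
            (try repeat apply Submodule.smul_mem) <;>
            first
              | exact Submodule.zero_mem _
              | exact h1S
              | exact hX1
              | exact hX0
              | exact hXm
              | exact h10
              | exact h1m
              | exact h0m
              | exact h7'
        | zero => rw [mul_zero]; exact Submodule.zero_mem _
        | add u v hu hv ihu ihv => rw [mul_add]; exact add_mem ihu ihv
        | smul r u hu ihu => rw [mul_smul_comm]; exact Submodule.smul_mem _ _ ihu
      | zero => rw [zero_mul]; exact Submodule.zero_mem _
      | add u v hu hv ihu ihv => rw [add_mul]; exact add_mem ihu ihv
      | smul r u hu ihu => rw [smul_mul_assoc]; exact Submodule.smul_mem _ _ ihu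
    rw [eq_top_iff]
    rintro x -
    obtain ⟨y, rfl⟩ := RingQuot.mkAlgHom_surjective ℝ (qRel q) x
    induction y using TensorAlgebra.induction with
    | algebraMap r =>
      rw [AlgHom.commutes, Algebra.algebraMap_eq_smul_one]
      exact Submodule.smul_mem _ _ h1S
    | ι x =>
      have hx : x = x 0 • v1 + x 1 • v0 + x 2 • vm1 := by
        funext i
        fin_cases i <;> simp [v1, v0, vm1, Pi.single_apply]
      rw [hx]
      simp only [map_add, map_smul]
      exact add_mem (add_mem (Submodule.smul_mem _ _ hX1) (Submodule.smul_mem _ _ hX0))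
        (Submodule.smul_mem _ _ hXm)
    | mul a b iha ihb =>
      rw [map_mul]
      exact hclosed _ iha _ ihb
    | add a b iha ihb =>
      rw [map_add]
      exact add_mem iha ihb
  · -- degree ≥ 4 vanishing
    intro a ha b hb c hc d hd
    simp only [Set.mem_insert_iff, Set.mem_singleton_iff] at ha hb hc hd
    rcases ha with rfl|rfl|rfl <;> rcases hb with rfl|rfl|rfl <;>
      rcases hc with rfl|rfl|rfl <;> rcases hd with rfl|rfl|rfl <;>
      simp only [qq1, qq4, qqA q hq, qqB q hq, qqC q hq, qqD q hq, ww1, ww4,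
        wwA q hq, wwB q hq, wwC q hq, wwD q hq, mul_assoc, smul_mul_assoc,
        mul_smul_comm, smul_smul, one_mul, mul_one, zero_mul, mul_zero, smul_zero]
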